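/- Let Z be a finite ep-metric space in which each x ∈ Z has a fixed complete neighbourhood N_x = Z(x, r_x), and suppose t ≥ S ≥ r_x for all x ∈ Z. Then the inclusion V_S(N) ⊆ V_t(N) of neighbourhood complexes induces a bijection π₀V_S(N) → π₀V_t(N); that is, two points of Z joined by a chain whose consecutive pairs lie in a common neighbourhood N_w and are at distance ≤ t are already joined by such a chain with consecutive distances ≤ S. -/

import Mathlib

open scoped ENNReal

/-- Edge relation of the neighbourhood complex `V_t(N)` for the system of
complete neighbourhoods `N_x = Z(x, r_x)`: pairs `{a,b}`, `a ≠ b`, with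
`d(a,b) ≤ t` and `{a,b} ⊆ N_w` for some `w`. -/
def rnRel {Z : Type*} [PseudoEMetricSpace Z] (r : Z → ℝ≥0∞) (t : ℝ≥0∞)
    (a b : Z) : Prop :=
  a ≠ b ∧ edist a b ≤ t ∧ ∃ w : Z, edist w a ≤ r w ∧ edist w b ≤ r w

/-- Corollary 21: let `Z` be a finite ep-metric space with a fixed complete
neighbourhood `N_x = Z(x, r_x)` for each `x` (all distances within the balls
being finite), and suppose `t ≥ S ≥ r_x` for all `x`.  Then the inclusion
`V_S(N) ⊆ V_t(N)` induces a bijection `π₀V_S(N) → π₀V_t(N)`: two points joined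
by a chain whose consecutive pairs lie in a common neighbourhood `N_w` and are
at distance `≤ t` are already joined by such a chain with consecutive
distances `≤ S`. -/
theorem nbhd_complex_pi0_stable {Z : Type*} [Fintype Z] [PseudoEMetricSpace Z]
    (r : Z → ℝ≥0∞) (hfin : ∀ x y : Z, edist x y ≤ r x → edist x y < ⊤)
    (S t : ℝ≥0∞) (ht : t ≠ ⊤) (hr : ∀ x : Z, r x ≤ S) (hSt : S ≤ t) :
    ∀ u v : Z,
      Relation.ReflTransGen (rnRel r S) u v ↔
        Relation.ReflTransGen (rnRel r t) u v := by
  intro u v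
  constructor
  · exact Relation.ReflTransGen.mono (r := rnRel r S) (p := rnRel r t) (fun a b ⟨h1, h2, h3⟩ => ⟨h1, h2.trans hSt, h3⟩) u v
  · intro h
    induction h with
    | refl => exact .refl
    | @tail b c _ hbc ih =>
      obtain ⟨hne, hd, w, hwb, hwc⟩ := hbc
      have hstep : Relation.ReflTransGen (rnRel r S) b c := by
        by_cases hbw : b = w
        · subst hbw
          exact .single ⟨hne, hwc.trans (hr b), b, by simp, hwc⟩
        · by_cases hwc' : w = c
          · subst hwc'
            exact .single ⟨hbw, (edist_comm b w ▸ hwb).trans (hr w), w, hwb, by simp⟩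
          · exact .tail
              (.single ⟨hbw, (edist_comm b w ▸ hwb).trans (hr w), w, hwb, by simp⟩)
              ⟨hwc', hwc.trans (hr w), w, by simp, hwc⟩
      exact ih.trans hstep
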